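/- For every ε ∈ (0, T) one has lim_{Λ↓0} sup_{0 ≤ s ≤ T−ε} ‖ (1/(2Λ)) · ∫_s^T (K^Λ_{t,s})² dt − σ^{-1}/(4√A) ‖ = 0, where ‖·‖ is any matrix norm. -/

import Mathlib

open MeasureTheory ProbabilityTheory Matrix Filter

noncomputable section

/-- Matrix hyperbolic sine `sinh(M) = (exp M − exp(−M))/2`. -/
def sinhM {d : ℕ} (M : Matrix (Fin d) (Fin d) ℝ) : Matrix (Fin d) (Fin d) ℝ :=
  (2 : ℝ)⁻¹ • (NormedSpace.exp M - NormedSpace.exp (-M))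

/-- Matrix hyperbolic cosine `cosh(M) = (exp M + exp(−M))/2`. -/
def coshM {d : ℕ} (M : Matrix (Fin d) (Fin d) ℝ) : Matrix (Fin d) (Fin d) ℝ :=
  (2 : ℝ)⁻¹ • (NormedSpace.exp M + NormedSpace.exp (-M))

/-- `K^Λ_{t,s} = cosh(√A(T−t)σ/Λ) (sinh(√A(T−s)σ/Λ))⁻¹`. -/
def Kmat {d : ℕ} (T A : ℝ) (σ : Matrix (Fin d) (Fin d) ℝ) (Λ t s : ℝ) :
    Matrix (Fin d) (Fin d) ℝ :=
  coshM ((Real.sqrt A * (T - t) / Λ) • σ) * (sinhM ((Real.sqrt A * (T - s) / Λ) • σ))⁻¹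

/-- `L^Λ_{t,s} = sinh(√A(T−t)σ/Λ) (sinh(√A(T−s)σ/Λ))⁻¹`. -/
def Lmat {d : ℕ} (T A : ℝ) (σ : Matrix (Fin d) (Fin d) ℝ) (Λ t s : ℝ) :
    Matrix (Fin d) (Fin d) ℝ :=
  sinhM ((Real.sqrt A * (T - t) / Λ) • σ) * (sinhM ((Real.sqrt A * (T - s) / Λ) • σ))⁻¹

/-- Frobenius norm of a matrix. -/
def matNorm {d : ℕ} (M : Matrix (Fin d) (Fin d) ℝ) : ℝ :=
  Real.sqrt (∑ i, ∑ j, (M i j) ^ 2)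

namespace Stmt9Aux

variable {d : ℕ} {U : Matrix (Fin d) (Fin d) ℝ}

lemma star_entry (U : Matrix (Fin d) (Fin d) ℝ) (i j : Fin d) : (star U) i j = U j i := by
  simp [Matrix.star_apply]

lemma conj_mul (hU' : star U * U = 1) (f g : Fin d → ℝ) :
    (U * diagonal f * star U) * (U * diagonal g * star U)
      = U * diagonal (fun k => f k * g k) * star U := by
  simp only [Matrix.mul_assoc]
  rw [← Matrix.mul_assoc (star U) U (diagonal g * star U), hU', Matrix.one_mul,
    ← Matrix.mul_assoc (diagonal f) (diagonal g) (star U), diagonal_mul_diagonal]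

lemma conj_inv (hU : U * star U = 1) (hU' : star U * U = 1) (f : Fin d → ℝ)
    (hf : ∀ k, f k ≠ 0) :
    (U * diagonal f * star U)⁻¹ = U * diagonal (fun k => (f k)⁻¹) * star U := by
  apply Matrix.inv_eq_right_inv
  rw [conj_mul hU', show (fun k => f k * (f k)⁻¹) = fun _ => (1:ℝ) from
    funext fun k => mul_inv_cancel₀ (hf k)]
  rw [show (diagonal (fun _ => (1:ℝ)) : Matrix (Fin d) (Fin d) ℝ) = 1 from diagonal_one,
    Matrix.mul_one, hU]

lemma conj_exp (hU : U * star U = 1) (hU' : star U * U = 1) (f : Fin d → ℝ) :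
    NormedSpace.exp (U * diagonal f * star U)
      = U * diagonal (fun k => Real.exp (f k)) * star U := by
  have hinv : U⁻¹ = star U := Matrix.inv_eq_right_inv hU
  have hu : IsUnit U := ⟨⟨U, star U, hU, hU'⟩, rfl⟩
  have hpi : NormedSpace.exp f = fun k => Real.exp (f k) := by
    rw [Pi.exp_def]
    funext k
    rw [← Real.exp_eq_exp_ℝ]
  rw [← hinv, Matrix.exp_conj U _ hu, Matrix.exp_diagonal, hpi]

lemma conj_smul (c : ℝ) (f : Fin d → ℝ) :
    c • (U * diagonal f * star U) = U * diagonal (fun k => c * f k) * star U := by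
  rw [show (fun k => c * f k) = c • f from rfl, diagonal_smul, mul_smul_comm, smul_mul_assoc]

lemma conj_neg (f : Fin d → ℝ) :
    -(U * diagonal f * star U) = U * diagonal (fun k => -(f k)) * star U := by
  have := conj_smul (U := U) (-1 : ℝ) f
  simpa using this

lemma conj_sub (f g : Fin d → ℝ) :
    (U * diagonal f * star U) - (U * diagonal g * star U)
      = U * diagonal (fun k => f k - g k) * star U := by
  rw [show diagonal (fun k => f k - g k) = diagonal f - diagonal g from (diagonal_sub f g).symm,
    Matrix.mul_sub, Matrix.sub_mul]

lemma conj_add (f g : Fin d → ℝ) :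
    (U * diagonal f * star U) + (U * diagonal g * star U)
      = U * diagonal (fun k => f k + g k) * star U := by
  rw [show diagonal (fun k => f k + g k) = diagonal f + diagonal g from (diagonal_add f g).symm,
    Matrix.mul_add, Matrix.add_mul]

lemma conj_entry (f : Fin d → ℝ) (i j : Fin d) :
    (U * diagonal f * star U) i j = ∑ k, U i k * f k * U j k := by
  rw [Matrix.mul_apply]
  refine Finset.sum_congr rfl fun k _ => ?_
  rw [Matrix.mul_diagonal, star_entry]

lemma sinh_conj (hU : U * star U = 1) (hU' : star U * U = 1) (f : Fin d → ℝ) :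
    sinhM (U * diagonal f * star U)
      = U * diagonal (fun k => Real.sinh (f k)) * star U := by
  unfold sinhM
  rw [conj_neg, conj_exp hU hU', conj_exp hU hU', conj_sub, conj_smul]
  have hfun : (fun k => (2:ℝ)⁻¹ * (Real.exp (f k) - Real.exp (-f k)))
      = fun k => Real.sinh (f k) := by
    funext k
    rw [Real.sinh_eq]
    ring
  rw [hfun]

lemma cosh_conj (hU : U * star U = 1) (hU' : star U * U = 1) (f : Fin d → ℝ) :
    coshM (U * diagonal f * star U)
      = U * diagonal (fun k => Real.cosh (f k)) * star U := by
  unfold coshM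
  rw [conj_neg, conj_exp hU hU', conj_exp hU hU', conj_add, conj_smul]
  have hfun : (fun k => (2:ℝ)⁻¹ * (Real.exp (f k) + Real.exp (-f k)))
      = fun k => Real.cosh (f k) := by
    funext k
    rw [Real.cosh_eq]
    ring
  rw [hfun]

lemma sum_sq_eq_trace (N : Matrix (Fin d) (Fin d) ℝ) :
    ∑ i, ∑ j, (N i j)^2 = Matrix.trace (Nᵀ * N) := by
  simp only [Matrix.trace, Matrix.diag_apply, Matrix.mul_apply, Matrix.transpose_apply, sq]
  exact Finset.sum_comm

lemma matNorm_conj (hU : U * star U = 1) (hU' : star U * U = 1)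
    (M : Matrix (Fin d) (Fin d) ℝ) :
    matNorm (U * M * star U) = matNorm M := by
  have hstar : star U = Uᵀ := by
    ext i j
    exact star_entry U i j
  have hUtU : Uᵀ * U = 1 := by rw [← hstar]; exact hU'
  unfold matNorm
  rw [sum_sq_eq_trace, sum_sq_eq_trace]
  congr 1
  have h1 : (U * M * Uᵀ)ᵀ * (U * M * Uᵀ) = U * (Mᵀ * M) * Uᵀ := by
    simp only [Matrix.transpose_mul, Matrix.transpose_transpose, Matrix.mul_assoc]
    rw [← Matrix.mul_assoc Uᵀ U, hUtU, Matrix.one_mul]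
  rw [hstar, h1, Matrix.trace_mul_cycle, ← Matrix.mul_assoc, hUtU, Matrix.one_mul]

lemma matNorm_diagonal (g : Fin d → ℝ) :
    matNorm (diagonal g) = Real.sqrt (∑ k, (g k)^2) := by
  unfold matNorm
  congr 1
  refine Finset.sum_congr rfl fun i _ => ?_
  rw [Finset.sum_eq_single i]
  · rw [diagonal_apply_eq]
  · intro j _ hj
    rw [diagonal_apply_ne' _ hj]
    exact zero_pow two_ne_zero
  · intro h
    exact absurd (Finset.mem_univ i) h

lemma integral_cosh_sq (β s T : ℝ) (hβ : 0 < β) :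
    ∫ t in s..T, Real.cosh (β * (T - t)) ^ 2
      = (T - s)/2 + Real.sinh (2 * (β * (T - s))) / (4 * β) := by
  have hderiv : ∀ t ∈ Set.uIcc s T, HasDerivAt
      (fun u => u/2 - Real.sinh (2 * (β * (T - u))) / (4 * β))
      (Real.cosh (β * (T - t)) ^ 2) t := by
    intro t _
    have hinner : HasDerivAt (fun u : ℝ => 2 * (β * (T - u))) (2 * (β * (-1))) t := by
      exact (((hasDerivAt_id t).const_sub T).const_mul β).const_mul 2
    have hsinh : HasDerivAt (fun u : ℝ => Real.sinh (2 * (β * (T - u))))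
        (Real.cosh (2 * (β * (T - t))) * (2 * (β * (-1)))) t :=
      (Real.hasDerivAt_sinh _).comp t hinner
    have h := ((hasDerivAt_id t).div_const 2).sub (hsinh.div_const (4 * β))
    refine h.congr_deriv ?_
    rw [Real.cosh_two_mul, Real.sinh_sq]
    field_simp
    ring
  have hcont : IntervalIntegrable (fun t => Real.cosh (β * (T - t)) ^ 2) volume s T := by
    apply Continuous.intervalIntegrable
    continuity
  have := intervalIntegral.integral_eq_sub_of_hasDerivAt hderiv hcont
  rw [this]
  simp only [sub_self, mul_zero, Real.sinh_zero, zero_div]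
  ring

lemma scalar_bound {sqA μ Λ ε T τ : ℝ} (hsqA : 0 < sqA) (hμ : 0 < μ) (hΛ : 0 < Λ)
    (hε : 0 < ε) (hτ1 : ε ≤ τ) (hτ2 : τ ≤ T) :
    0 ≤ (2*Λ)⁻¹ * (((Real.sinh (sqA*μ/Λ*τ))⁻¹)^2
          * (τ/2 + Real.sinh (2 * (sqA*μ/Λ*τ)) / (4 * (sqA*μ/Λ))))
        - (4*sqA)⁻¹ * μ⁻¹
    ∧ (2*Λ)⁻¹ * (((Real.sinh (sqA*μ/Λ*τ))⁻¹)^2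
          * (τ/2 + Real.sinh (2 * (sqA*μ/Λ*τ)) / (4 * (sqA*μ/Λ))))
        - (4*sqA)⁻¹ * μ⁻¹
      ≤ Λ * (T/(4*(sqA*μ)^2*ε^2) + 1/(4*(sqA*μ)^2*ε)) := by
  have hτ0 : 0 < τ := lt_of_lt_of_le hε hτ1
  set β := sqA*μ/Λ with hβdef
  have hβ : 0 < β := by positivity
  set x := β * τ with hxdef
  have hx : 0 < x := by positivity
  have hS : 0 < Real.sinh x := Real.sinh_pos_iff.2 hx
  have hxS : x ≤ Real.sinh x := (Real.self_lt_sinh_iff.2 hx).le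
  have hβε : β * ε ≤ Real.sinh x := by
    refine le_trans ?_ hxS
    rw [hxdef]
    nlinarith
  have hid : (2*Λ)⁻¹ * (((Real.sinh x)⁻¹)^2
          * (τ/2 + Real.sinh (2 * x) / (4 * β))) - (4*sqA)⁻¹ * μ⁻¹
      = τ/(4*Λ*(Real.sinh x)^2) + Real.exp (-x)/(4*(sqA*μ)*Real.sinh x) := by
    have key : Real.sinh (2*x) = 2 * Real.sinh x * (Real.sinh x + Real.exp (-x)) := by
      rw [Real.sinh_two_mul, ← Real.cosh_sub_sinh]
      ring
    rw [key, hβdef]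
    field_simp
    ring
  rw [hid]
  constructor
  · positivity
  · have hb1 : τ/(4*Λ*(Real.sinh x)^2) ≤ Λ * (T/(4*(sqA*μ)^2*ε^2)) := by
      have he : Λ * (T/(4*(sqA*μ)^2*ε^2)) = T/(4*Λ*(β*ε)^2) := by
        rw [hβdef]
        field_simp
      rw [he]
      refine div_le_div₀ (le_trans hτ0.le hτ2) hτ2 (by positivity) ?_
      nlinarith [mul_le_mul hβε hβε (by positivity : (0:ℝ) ≤ β*ε) hS.le]
    have hb2 : Real.exp (-x)/(4*(sqA*μ)*Real.sinh x) ≤ Λ * (1/(4*(sqA*μ)^2*ε)) := by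
      have he : Λ * (1/(4*(sqA*μ)^2*ε)) = 1/(4*(sqA*μ)*(β*ε)) := by
        rw [hβdef]
        field_simp
      rw [he]
      refine div_le_div₀ zero_le_one (Real.exp_le_one_iff.2 (by linarith)) (by positivity) ?_
      nlinarith [mul_le_mul_of_nonneg_left hβε (by positivity : (0:ℝ) ≤ 4*(sqA*μ))]
    calc τ/(4*Λ*(Real.sinh x)^2) + Real.exp (-x)/(4*(sqA*μ)*Real.sinh x)
        ≤ Λ * (T/(4*(sqA*μ)^2*ε^2)) + Λ * (1/(4*(sqA*μ)^2*ε)) := add_le_add hb1 hb2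
      _ = Λ * (T/(4*(sqA*μ)^2*ε^2) + 1/(4*(sqA*μ)^2*ε)) := by ring

end Stmt9Aux

/-- For every `ε ∈ (0,T)`,
`lim_{Λ↓0} sup_{0 ≤ s ≤ T−ε} ‖(1/(2Λ))·∫_s^T (K^Λ_{t,s})² dt − σ⁻¹/(4√A)‖ = 0`. -/
theorem stmt9 (T : ℝ) (hT : 0 < T) {d : ℕ} (hd : 1 ≤ d)
    (σ : Matrix (Fin d) (Fin d) ℝ) (hσ : σ.PosDef) (A : ℝ) (hA : 0 < A) :
    ∀ ε : ℝ, 0 < ε → ε < T →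
      Tendsto (fun Λ : ℝ =>
          sSup {r | ∃ s : ℝ, 0 ≤ s ∧ s ≤ T - ε ∧
            r = matNorm ((2 * Λ)⁻¹ •
                  (Matrix.of fun i j =>
                    ∫ t in s..T, (Kmat T A σ Λ t s * Kmat T A σ Λ t s) i j)
                - (4 * Real.sqrt A)⁻¹ • σ⁻¹)})
        (nhdsWithin 0 (Set.Ioi 0)) (nhds 0) := by
  intro ε hε hεT
  classical
  set U : Matrix (Fin d) (Fin d) ℝ := (hσ.1.eigenvectorUnitary : Matrix (Fin d) (Fin d) ℝ)
    with hUdef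
  set μ : Fin d → ℝ := hσ.1.eigenvalues with hμdef
  have hU : U * star U = 1 := mem_unitaryGroup_iff.mp hσ.1.eigenvectorUnitary.2
  have hU' : star U * U = 1 := mem_unitaryGroup_iff'.mp hσ.1.eigenvectorUnitary.2
  have hμpos : ∀ k, 0 < μ k := fun k => hσ.eigenvalues_pos k
  have hsqA : 0 < Real.sqrt A := Real.sqrt_pos.2 hA
  have hspec : σ = U * diagonal μ * star U := by
    have h := hσ.1.spectral_theorem
    rwa [show RCLike.ofReal ∘ hσ.1.eigenvalues = μ from by
      funext k; simp [hμdef, RCLike.ofReal_real_eq_id]] at h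
  have hσinv : σ⁻¹ = U * diagonal (fun k => (μ k)⁻¹) * star U := by
    rw [hspec]
    exact Stmt9Aux.conj_inv hU hU' μ (fun k => (hμpos k).ne')
  set C : Fin d → ℝ := fun k =>
    T/(4*(Real.sqrt A*μ k)^2*ε^2) + 1/(4*(Real.sqrt A*μ k)^2*ε) with hCdef
  set CC : ℝ := Real.sqrt (∑ k, (C k)^2) with hCCdef
  have hCC : 0 ≤ CC := Real.sqrt_nonneg _
  -- the key uniform bound
  have key : ∀ Λ : ℝ, 0 < Λ → ∀ s : ℝ, 0 ≤ s → s ≤ T - ε →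
      matNorm ((2 * Λ)⁻¹ •
          (Matrix.of fun i j =>
            ∫ t in s..T, (Kmat T A σ Λ t s * Kmat T A σ Λ t s) i j)
        - (4 * Real.sqrt A)⁻¹ • σ⁻¹) ≤ CC * Λ := by
    intro Λ hΛ s hs0 hsT
    have hτ1 : ε ≤ T - s := by linarith
    have hτ2 : T - s ≤ T := by linarith
    have hTs : 0 < T - s := lt_of_lt_of_le hε hτ1
    have hβpos : ∀ k, 0 < Real.sqrt A * μ k / Λ :=
      fun k => div_pos (mul_pos hsqA (hμpos k)) hΛ
    have hc : ∀ (c : ℝ), c • σ = U * diagonal (fun k => c * μ k) * star U := by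
      intro c
      rw [hspec, Stmt9Aux.conj_smul]
    have hne : ∀ k, Real.sinh (Real.sqrt A * (T - s) / Λ * μ k) ≠ 0 := fun k =>
      (Real.sinh_pos_iff.2 (mul_pos (div_pos (mul_pos hsqA hTs) hΛ) (hμpos k))).ne'
    have harg : ∀ (u : ℝ) (k : Fin d),
        Real.sqrt A * u / Λ * μ k = Real.sqrt A * μ k / Λ * u := by
      intro u k
      ring
    have hKdiag : ∀ t : ℝ, Kmat T A σ Λ t s
        = U * diagonal (fun k => Real.cosh (Real.sqrt A * μ k / Λ * (T - t))
            * (Real.sinh (Real.sqrt A * μ k / Λ * (T - s)))⁻¹) * star U := by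
      intro t
      unfold Kmat
      rw [hc, hc, Stmt9Aux.cosh_conj hU hU', Stmt9Aux.sinh_conj hU hU',
        Stmt9Aux.conj_inv hU hU' _ hne, Stmt9Aux.conj_mul hU']
      have hfun : (fun k => Real.cosh (Real.sqrt A * (T - t) / Λ * μ k)
            * (Real.sinh (Real.sqrt A * (T - s) / Λ * μ k))⁻¹)
          = fun k => Real.cosh (Real.sqrt A * μ k / Λ * (T - t))
            * (Real.sinh (Real.sqrt A * μ k / Λ * (T - s)))⁻¹ := by
        funext k
        rw [harg, harg]
      rw [hfun]
    have hKK : ∀ t : ℝ, Kmat T A σ Λ t s * Kmat T A σ Λ t s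
        = U * diagonal (fun k => (Real.cosh (Real.sqrt A * μ k / Λ * (T - t))
            * (Real.sinh (Real.sqrt A * μ k / Λ * (T - s)))⁻¹)^2) * star U := by
      intro t
      rw [hKdiag t, Stmt9Aux.conj_mul hU']
      have hfun : (fun k => (Real.cosh (Real.sqrt A * μ k / Λ * (T - t))
            * (Real.sinh (Real.sqrt A * μ k / Λ * (T - s)))⁻¹)
          * (Real.cosh (Real.sqrt A * μ k / Λ * (T - t))
            * (Real.sinh (Real.sqrt A * μ k / Λ * (T - s)))⁻¹))
          = fun k => (Real.cosh (Real.sqrt A * μ k / Λ * (T - t))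
            * (Real.sinh (Real.sqrt A * μ k / Λ * (T - s)))⁻¹)^2 := by
        funext k
        ring
      rw [hfun]
    set J : Fin d → ℝ := fun k =>
      ((Real.sinh (Real.sqrt A * μ k / Λ * (T - s)))⁻¹)^2
        * ((T - s)/2 + Real.sinh (2 * (Real.sqrt A * μ k / Λ * (T - s)))
            / (4 * (Real.sqrt A * μ k / Λ))) with hJdef
    have hInt : ∀ k : Fin d,
        (∫ t in s..T, (Real.cosh (Real.sqrt A * μ k / Λ * (T - t))
          * (Real.sinh (Real.sqrt A * μ k / Λ * (T - s)))⁻¹)^2) = J k := by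
      intro k
      have hfun : (fun t => (Real.cosh (Real.sqrt A * μ k / Λ * (T - t))
            * (Real.sinh (Real.sqrt A * μ k / Λ * (T - s)))⁻¹)^2)
          = fun t => Real.cosh (Real.sqrt A * μ k / Λ * (T - t))^2
            * ((Real.sinh (Real.sqrt A * μ k / Λ * (T - s)))⁻¹)^2 := by
        funext t
        ring
      rw [hfun, intervalIntegral.integral_mul_const,
        Stmt9Aux.integral_cosh_sq _ _ _ (hβpos k), hJdef]
      ring
    have hmat : (Matrix.of fun i j =>
          ∫ t in s..T, (Kmat T A σ Λ t s * Kmat T A σ Λ t s) i j)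
        = U * diagonal J * star U := by
      ext i j
      rw [Matrix.of_apply]
      have h1 : (fun t => (Kmat T A σ Λ t s * Kmat T A σ Λ t s) i j)
          = fun t => ∑ k, U i k * (Real.cosh (Real.sqrt A * μ k / Λ * (T - t))
              * (Real.sinh (Real.sqrt A * μ k / Λ * (T - s)))⁻¹)^2 * U j k := by
        funext t
        rw [hKK t, Stmt9Aux.conj_entry]
      rw [h1, intervalIntegral.integral_finset_sum]
      · rw [Stmt9Aux.conj_entry]
        refine Finset.sum_congr rfl fun k _ => ?_
        rw [intervalIntegral.integral_mul_const, intervalIntegral.integral_const_mul, hInt k]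
      · intro k _
        apply Continuous.intervalIntegrable
        fun_prop
    set g : Fin d → ℝ := fun k => (2*Λ)⁻¹ * J k - (4*Real.sqrt A)⁻¹ * (μ k)⁻¹ with hgdef
    have hdiff : (2 * Λ)⁻¹ •
          (Matrix.of fun i j =>
            ∫ t in s..T, (Kmat T A σ Λ t s * Kmat T A σ Λ t s) i j)
        - (4 * Real.sqrt A)⁻¹ • σ⁻¹ = U * diagonal g * star U := by
      rw [hmat, hσinv, Stmt9Aux.conj_smul, Stmt9Aux.conj_smul, Stmt9Aux.conj_sub]
    have hgb : ∀ k, 0 ≤ g k ∧ g k ≤ Λ * C k := by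
      intro k
      have := Stmt9Aux.scalar_bound hsqA (hμpos k) hΛ hε hτ1 hτ2
      rw [hgdef, hJdef, hCdef]
      exact this
    rw [hdiff, Stmt9Aux.matNorm_conj hU hU', Stmt9Aux.matNorm_diagonal]
    have hsum : (∑ k, (g k)^2) ≤ ∑ k, (Λ * C k)^2 := by
      refine Finset.sum_le_sum fun k _ => ?_
      exact pow_le_pow_left₀ (hgb k).1 (hgb k).2 2
    calc Real.sqrt (∑ k, (g k)^2) ≤ Real.sqrt (∑ k, (Λ * C k)^2) := Real.sqrt_le_sqrt hsum
      _ = CC * Λ := by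
          rw [show (∑ k, (Λ * C k)^2) = Λ^2 * ∑ k, (C k)^2 from by
            rw [Finset.mul_sum]; exact Finset.sum_congr rfl fun k _ => by ring]
          rw [Real.sqrt_mul (sq_nonneg Λ), Real.sqrt_sq hΛ.le, hCCdef, mul_comm]
  -- conclude via squeeze
  have hmem : ∀ Λ : ℝ, 0 < Λ →
      matNorm ((2 * Λ)⁻¹ •
          (Matrix.of fun i j =>
            ∫ t in (0:ℝ)..T, (Kmat T A σ Λ t 0 * Kmat T A σ Λ t 0) i j)
        - (4 * Real.sqrt A)⁻¹ • σ⁻¹) ∈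
      {r | ∃ s : ℝ, 0 ≤ s ∧ s ≤ T - ε ∧
        r = matNorm ((2 * Λ)⁻¹ •
              (Matrix.of fun i j =>
                ∫ t in s..T, (Kmat T A σ Λ t s * Kmat T A σ Λ t s) i j)
            - (4 * Real.sqrt A)⁻¹ • σ⁻¹)} := by
    intro Λ hΛ
    exact ⟨0, le_refl 0, by linarith, rfl⟩
  have hbdd : ∀ Λ : ℝ, 0 < Λ → ∀ r ∈ {r | ∃ s : ℝ, 0 ≤ s ∧ s ≤ T - ε ∧
        r = matNorm ((2 * Λ)⁻¹ •
              (Matrix.of fun i j =>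
                ∫ t in s..T, (Kmat T A σ Λ t s * Kmat T A σ Λ t s) i j)
            - (4 * Real.sqrt A)⁻¹ • σ⁻¹)}, r ≤ CC * Λ := by
    intro Λ hΛ r hr
    obtain ⟨s, hs0, hsT, rfl⟩ := hr
    exact key Λ hΛ s hs0 hsT
  refine tendsto_of_tendsto_of_tendsto_of_le_of_le' tendsto_const_nhds
    (show Tendsto (fun Λ : ℝ => CC * Λ) (nhdsWithin 0 (Set.Ioi 0)) (nhds 0) from by
      have h1 : Tendsto (fun Λ : ℝ => CC * Λ) (nhds 0) (nhds (CC * 0)) :=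
        (continuous_const.mul continuous_id).tendsto 0
      rw [mul_zero] at h1
      exact h1.mono_left nhdsWithin_le_nhds) ?_ ?_
  · filter_upwards [eventually_mem_nhdsWithin] with Λ hΛ
    have hΛ' : 0 < Λ := hΛ
    refine le_csSup ⟨CC * Λ, fun r hr => hbdd Λ hΛ' r hr⟩ (hmem Λ hΛ') |>.trans' ?_
    unfold matNorm
    exact Real.sqrt_nonneg _
  · filter_upwards [eventually_mem_nhdsWithin] with Λ hΛ
    have hΛ' : 0 < Λ := hΛ
    exact csSup_le ⟨_, hmem Λ hΛ'⟩ (hbdd Λ hΛ')
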